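/- Consider the parallel stochastic Newton iteration x^{k+1} = x^k − (1/b) Σ_{i=1}^c (M_{S^k_i})⁻¹ ∇f(x^k), where the S^k_i are i.i.d. copies of a proper non-vacuous sampling Ŝ, f satisfies f(x)+⟨∇f(x),h⟩+½⟨h,Gh⟩ ≤ f(x+h) ≤ f(x)+⟨∇f(x),h⟩+½⟨h,Mh⟩ with 0 ≺ G ⪯ M. Let λ = λ_max(G^{-1/2} M G^{-1/2}), θ = λ_max(G^{1/2} E[(M_Ŝ)⁻¹] G^{1/2}), σ₁ = λ_min(G^{1/2} E[(M_Ŝ)⁻¹] G^{1/2}). If b ≥ (c−1)λθ + 1, then E[f(x^{k+1}) − f(x*)] ≤ (1 − cσ₁/b) · E[f(x^k) − f(x*)]. -/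

import Mathlib

open Matrix BigOperators Finset

noncomputable section

/-- `A_S`: zero out entries of `A` outside rows/columns indexed by `S`. -/
def zeroPad {n : ℕ} (A : Matrix (Fin n) (Fin n) ℝ) (S : Finset (Fin n)) :
    Matrix (Fin n) (Fin n) ℝ :=
  Matrix.of fun i j => if i ∈ S ∧ j ∈ S then A i j else 0

/-- `(M_S)⁻¹`: invert the principal submatrix `M_{SS}` in place, zeros elsewhere. -/
def inPlaceInv {n : ℕ} (M : Matrix (Fin n) (Fin n) ℝ) (S : Finset (Fin n)) :
    Matrix (Fin n) (Fin n) ℝ :=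
  Matrix.of fun i j =>
    if hi : i ∈ S then
      if hj : j ∈ S then
        (M.submatrix (fun a : {x // x ∈ S} => (a : Fin n))
            (fun a : {x // x ∈ S} => (a : Fin n)))⁻¹ ⟨i, hi⟩ ⟨j, hj⟩
      else 0
    else 0

/-- The square root of a positive semidefinite matrix, as `Matrix.PosSemidef.sqrt` was defined
in Mathlib (December 2024); removed from Mathlib since. -/
def Matrix.PosSemidef.sqrt {n : Type*} [Fintype n] [DecidableEq n] {A : Matrix n n ℝ}
    (hA : A.PosSemidef) : Matrix n n ℝ :=
  hA.1.eigenvectorUnitary.1 * diagonal ((↑) ∘ (√·) ∘ hA.1.eigenvalues) *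
    (star hA.1.eigenvectorUnitary : Matrix n n ℝ)

namespace PSN

variable {n : ℕ}

/-- embedding matrix -/
def emb (S : Finset (Fin n)) : Matrix (Fin n) {x // x ∈ S} ℝ :=
  Matrix.of fun i a => if i = ↑a then 1 else 0

lemma emb_tt_mul (S : Finset (Fin n)) (A : Matrix (Fin n) (Fin n) ℝ) :
    (emb S)ᵀ * A * emb S = A.submatrix (fun a : {x // x ∈ S} => (a : Fin n))
      (fun a : {x // x ∈ S} => (a : Fin n)) := by
  ext a b
  simp [Matrix.mul_apply, emb, Finset.sum_mul, ite_and, mul_comm]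

lemma emb_mul_tt (S : Finset (Fin n)) (C : Matrix {x // x ∈ S} {x // x ∈ S} ℝ) :
    emb S * C * (emb S)ᵀ = Matrix.of fun i j =>
      if hi : i ∈ S then if hj : j ∈ S then C ⟨i, hi⟩ ⟨j, hj⟩ else 0 else 0 := by
  ext i j
  simp only [Matrix.mul_apply, emb, Matrix.transpose_apply, Matrix.of_apply]
  have : ∀ b : {x // x ∈ S}, (∑ a : {x // x ∈ S},
      (if i = ↑a then (1:ℝ) else 0) * C a b) * (if j = ↑b then 1 else 0) =
      (if hi : i ∈ S then C ⟨i, hi⟩ b else 0) * (if j = ↑b then 1 else 0) := by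
    intro b
    congr 1
    split
    · next hi =>
      rw [Finset.sum_eq_single ⟨i, hi⟩]
      · simp
      · intro a _ ha
        have : ¬ (i = ↑a) := by
          intro h; apply ha; apply Subtype.ext; exact h.symm
        simp [this]
      · simp
    · next hi =>
      have : ∀ a : {x // x ∈ S}, ¬ (i = ↑a) := by
        intro a h; exact hi (by rw [h]; exact a.2)
      simp [this]
  simp only [this]
  by_cases hi : i ∈ S
  · simp only [dif_pos hi]
    by_cases hj : j ∈ S
    · simp only [dif_pos hj]
      rw [Finset.sum_eq_single ⟨j, hj⟩]
      · simp
      · intro a _ ha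
        have : ¬ (j = ↑a) := by
          intro h; apply ha; apply Subtype.ext; exact h.symm
        simp [this]
      · simp
    · have : ∀ a : {x // x ∈ S}, ¬ (j = ↑a) := by
        intro a h; exact hj (by rw [h]; exact a.2)
      simp [this, hj]
  · simp [dif_neg hi]

lemma inPlaceInv_eq (M : Matrix (Fin n) (Fin n) ℝ) (S : Finset (Fin n)) :
    inPlaceInv M S = emb S * (M.submatrix (fun a : {x // x ∈ S} => (a : Fin n))
      (fun a : {x // x ∈ S} => (a : Fin n)))⁻¹ * (emb S)ᵀ := by
  rw [emb_mul_tt]; rfl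


lemma emb_tt_emb (S : Finset (Fin n)) : (emb S)ᵀ * emb S = 1 := by
  ext a b
  simp only [Matrix.mul_apply, emb, Matrix.transpose_apply, Matrix.of_apply]
  rw [Finset.sum_eq_single (↑a : Fin n)]
  · by_cases h : a = b
    · subst h; simp
    · have : ¬ ((↑a : Fin n) = ↑b) := fun hh => h (Subtype.ext hh)
      simp [this, Matrix.one_apply, h]
  · intro i _ hi
    simp [hi]
  · simp

lemma emb_mulVec (S : Finset (Fin n)) (x : {x // x ∈ S} → ℝ) (a : {x // x ∈ S}) :
    (emb S *ᵥ x) (↑a : Fin n) = x a := by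
  simp only [Matrix.mulVec, dotProduct, emb, Matrix.of_apply]
  rw [Finset.sum_eq_single a]
  · simp
  · intro b _ hb
    have : ¬ ((↑a : Fin n) = ↑b) := fun hh => hb (Subtype.ext hh.symm)
    simp [this]
  · simp

lemma submatrix_posDef {M : Matrix (Fin n) (Fin n) ℝ} (hM : M.PosDef) (S : Finset (Fin n)) :
    (M.submatrix (fun a : {x // x ∈ S} => (a : Fin n))
      (fun a : {x // x ∈ S} => (a : Fin n))).PosDef := by
  rw [← emb_tt_mul]
  refine Matrix.PosDef.of_dotProduct_mulVec_pos ?_ ?_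
  · have h1 : ((emb S)ᵀ * M * emb S)ᴴ = (emb S)ᴴ * Mᴴ * ((emb S)ᵀ)ᴴ := by
      simp [Matrix.conjTranspose_mul, Matrix.mul_assoc]
    rw [Matrix.IsHermitian, h1, hM.isHermitian.eq]
    have : (emb S)ᴴ = (emb S)ᵀ := rfl
    rw [this]
    have : ((emb S)ᵀ)ᴴ = emb S := by
      ext i j; simp [Matrix.conjTranspose_apply]
    rw [this]
  · intro x hx
    have hEx : emb S *ᵥ x ≠ 0 := by
      intro h
      apply hx
      funext a
      have := congrFun h (↑a : Fin n)
      rwa [emb_mulVec] at this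
    have key : star x ⬝ᵥ ((emb S)ᵀ * M * emb S) *ᵥ x
        = star (emb S *ᵥ x) ⬝ᵥ M *ᵥ (emb S *ᵥ x) := by
      rw [← Matrix.mulVec_mulVec, ← Matrix.mulVec_mulVec, Matrix.dotProduct_mulVec,
        Matrix.vecMul_transpose]
      have : star x = x := rfl
      rw [this]
      have : star (emb S *ᵥ x) = emb S *ᵥ x := rfl
      rw [this, Matrix.dotProduct_mulVec]
    rw [key]
    exact hM.dotProduct_mulVec_pos hEx

lemma inPlaceInv_mul_mul {M : Matrix (Fin n) (Fin n) ℝ} (hM : M.PosDef) (S : Finset (Fin n)) :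
    inPlaceInv M S * M * inPlaceInv M S = inPlaceInv M S := by
  set B := M.submatrix (fun a : {x // x ∈ S} => (a : Fin n))
      (fun a : {x // x ∈ S} => (a : Fin n)) with hB
  have hBd : B.PosDef := submatrix_posDef hM S
  have hBu : IsUnit B.det := hBd.isUnit.map (detMonoidHom)
  rw [inPlaceInv_eq]
  have hmid : (emb S)ᵀ * M * emb S = B := emb_tt_mul S M
  calc emb S * B⁻¹ * (emb S)ᵀ * M * (emb S * B⁻¹ * (emb S)ᵀ)
      = emb S * (B⁻¹ * ((emb S)ᵀ * M * emb S) * B⁻¹) * (emb S)ᵀ := by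
        simp only [Matrix.mul_assoc]
    _ = emb S * B⁻¹ * (emb S)ᵀ := by
        rw [hmid, Matrix.nonsing_inv_mul _ hBu, Matrix.one_mul]

lemma inPlaceInv_posSemidef {M : Matrix (Fin n) (Fin n) ℝ} (hM : M.PosDef)
    (S : Finset (Fin n)) : (inPlaceInv M S).PosSemidef := by
  rw [inPlaceInv_eq]
  have hBd : (M.submatrix (fun a : {x // x ∈ S} => (a : Fin n))
      (fun a : {x // x ∈ S} => (a : Fin n))).PosDef := submatrix_posDef hM S
  have : (emb S)ᵀ = (emb S)ᴴ := by
    ext i j; simp [Matrix.conjTranspose_apply]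
  rw [this]
  exact hBd.inv.posSemidef.mul_mul_conjTranspose_same (emb S)


section spectral

variable {A : Matrix (Fin n) (Fin n) ℝ} (hA : A.IsHermitian)

lemma star_coords (v : Fin n → ℝ) :
    v ⬝ᵥ v = ∑ i, ((star (hA.eigenvectorUnitary : Matrix (Fin n) (Fin n) ℝ)) *ᵥ v) i ^ 2 := by
  set U := (hA.eigenvectorUnitary : Matrix (Fin n) (Fin n) ℝ)
  have hUU : U * star U = 1 := (Matrix.mem_unitaryGroup_iff).mp hA.eigenvectorUnitary.2
  have h1 : v ⬝ᵥ v = v ⬝ᵥ ((U * star U) *ᵥ v) := by rw [hUU, Matrix.one_mulVec]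
  rw [h1, ← Matrix.mulVec_mulVec, Matrix.dotProduct_mulVec]
  have h2 : v ᵥ* U = star U *ᵥ v := by
    rw [← Matrix.vecMul_transpose]
    congr 1
  rw [h2, dotProduct]
  congr 1; funext i; ring

lemma quad_coords (v : Fin n → ℝ) :
    v ⬝ᵥ A *ᵥ v = ∑ i, hA.eigenvalues i *
      ((star (hA.eigenvectorUnitary : Matrix (Fin n) (Fin n) ℝ)) *ᵥ v) i ^ 2 := by
  set U := (hA.eigenvectorUnitary : Matrix (Fin n) (Fin n) ℝ) with hU
  have hspec : A = U * Matrix.diagonal hA.eigenvalues * star U := by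
    have := hA.spectral_theorem
    simpa using this
  conv_lhs => rw [hspec]
  rw [← Matrix.mulVec_mulVec, ← Matrix.mulVec_mulVec, Matrix.dotProduct_mulVec]
  have h2 : v ᵥ* U = star U *ᵥ v := by
    rw [← Matrix.vecMul_transpose]
    congr 1
  rw [h2, dotProduct]
  congr 1; funext i
  rw [Matrix.mulVec_diagonal]
  ring

lemma quad_sq_coords (v : Fin n → ℝ) :
    v ⬝ᵥ (A * A) *ᵥ v = ∑ i, (hA.eigenvalues i *
      ((star (hA.eigenvectorUnitary : Matrix (Fin n) (Fin n) ℝ)) *ᵥ v) i) ^ 2 := by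
  set U := (hA.eigenvectorUnitary : Matrix (Fin n) (Fin n) ℝ) with hU
  have hUU : star U * U = 1 := (Matrix.mem_unitaryGroup_iff').mp hA.eigenvectorUnitary.2
  have hspec : A = U * Matrix.diagonal hA.eigenvalues * star U := by
    have := hA.spectral_theorem
    simpa using this
  have hAA : A * A = U * (Matrix.diagonal hA.eigenvalues * Matrix.diagonal hA.eigenvalues)
      * star U := by
    conv_lhs => rw [hspec]
    calc U * Matrix.diagonal hA.eigenvalues * star U *
          (U * Matrix.diagonal hA.eigenvalues * star U)
        = U * (Matrix.diagonal hA.eigenvalues * (star U * U) * Matrix.diagonal hA.eigenvalues)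
          * star U := by simp only [Matrix.mul_assoc]
      _ = _ := by rw [hUU]; simp only [Matrix.mul_one, Matrix.mul_assoc]
        
  rw [hAA, ← Matrix.mulVec_mulVec, ← Matrix.mulVec_mulVec, Matrix.dotProduct_mulVec]
  have h2 : v ᵥ* U = star U *ᵥ v := by
    rw [← Matrix.vecMul_transpose]
    congr 1
  rw [h2, Matrix.diagonal_mul_diagonal, dotProduct]
  congr 1; funext i
  rw [Matrix.mulVec_diagonal]
  ring

lemma rayleigh_upper (hn : 0 < n) (v : Fin n → ℝ) :
    v ⬝ᵥ A *ᵥ v ≤ (⨆ i, hA.eigenvalues i) * (v ⬝ᵥ v) := by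
  rw [quad_coords hA v, star_coords hA v, Finset.mul_sum]
  apply Finset.sum_le_sum
  intro i _
  apply mul_le_mul_of_nonneg_right _ (sq_nonneg _)
  exact le_ciSup (Set.Finite.bddAbove (Set.finite_range _)) i

lemma rayleigh_lower (hn : 0 < n) (v : Fin n → ℝ) :
    (⨅ i, hA.eigenvalues i) * (v ⬝ᵥ v) ≤ v ⬝ᵥ A *ᵥ v := by
  rw [quad_coords hA v, star_coords hA v, Finset.mul_sum]
  apply Finset.sum_le_sum
  intro i _
  apply mul_le_mul_of_nonneg_right _ (sq_nonneg _)
  exact ciInf_le (Set.Finite.bddBelow (Set.finite_range _)) i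

lemma rayleigh_sq (hn : 0 < n) (hps : A.PosSemidef) (v : Fin n → ℝ) :
    v ⬝ᵥ (A * A) *ᵥ v ≤ (⨆ i, hA.eigenvalues i) * (v ⬝ᵥ A *ᵥ v) := by
  have heig : ∀ i, hps.1.eigenvalues i = hA.eigenvalues i := fun i => rfl
  rw [quad_sq_coords hA v, quad_coords hA v, Finset.mul_sum]
  apply Finset.sum_le_sum
  intro i _
  have h0 : 0 ≤ hA.eigenvalues i := hps.eigenvalues_nonneg i
  have hle : hA.eigenvalues i ≤ ⨆ j, hA.eigenvalues j :=
    le_ciSup (Set.Finite.bddAbove (Set.finite_range _)) i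
  have hc2 := sq_nonneg (((star (hA.eigenvectorUnitary : Matrix (Fin n) (Fin n) ℝ)) *ᵥ v) i)
  have h3 : 0 ≤ hA.eigenvalues i *
      ((star (hA.eigenvectorUnitary : Matrix (Fin n) (Fin n) ℝ)) *ᵥ v) i ^ 2 :=
    mul_nonneg h0 hc2
  calc (hA.eigenvalues i * ((star (hA.eigenvectorUnitary : Matrix (Fin n) (Fin n) ℝ)) *ᵥ v) i) ^ 2
      = hA.eigenvalues i * (hA.eigenvalues i *
        ((star (hA.eigenvectorUnitary : Matrix (Fin n) (Fin n) ℝ)) *ᵥ v) i ^ 2) := by ring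
    _ ≤ (⨆ j, hA.eigenvalues j) * (hA.eigenvalues i *
        ((star (hA.eigenvectorUnitary : Matrix (Fin n) (Fin n) ℝ)) *ᵥ v) i ^ 2) :=
      mul_le_mul_of_nonneg_right hle h3

end spectral


section expectation

variable {α : Type*} [Fintype α] [DecidableEq α] {c : ℕ} (w : α → ℝ)

lemma factor (F : Fin c → α → ℝ) :
    ∑ s : Fin c → α, ∏ i, F i (s i) = ∏ i, ∑ a, F i a := by
  rw [← Fintype.piFinset_univ, Finset.sum_prod_piFinset]

lemma sum_prod_one (hw1 : ∑ a, w a = 1) :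
    ∑ s : Fin c → α, ∏ i, w (s i) = 1 := by
  rw [factor]; simp [hw1]

lemma marg1 (hw1 : ∑ a, w a = 1) (i₀ : Fin c) (φ : α → ℝ) :
    ∑ s : Fin c → α, (∏ i, w (s i)) * φ (s i₀) = ∑ a, w a * φ a := by
  have key : ∀ s : Fin c → α, (∏ i, w (s i)) * φ (s i₀)
      = ∏ i, (if i = i₀ then φ (s i) else 1) * w (s i) := by
    intro s
    rw [Finset.prod_mul_distrib, Finset.prod_ite_eq' Finset.univ i₀ (fun i => φ (s i))]
    simp [mul_comm]
  simp_rw [key]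
  rw [factor (fun i a => (if i = i₀ then φ a else 1) * w a)]
  have h2 : ∀ i : Fin c, (∑ a, (if i = i₀ then φ a else 1) * w a)
      = if i = i₀ then ∑ a, w a * φ a else 1 := by
    intro i
    split <;> simp [hw1, mul_comm]
  rw [Finset.prod_congr rfl (fun i _ => h2 i),
    Finset.prod_ite_eq' Finset.univ i₀ (fun _ => ∑ a, w a * φ a)]
  simp

lemma marg2 (hw1 : ∑ a, w a = 1) (i₀ j₀ : Fin c) (hij : i₀ ≠ j₀) (φ ψ : α → ℝ) :
    ∑ s : Fin c → α, (∏ i, w (s i)) * (φ (s i₀) * ψ (s j₀))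
      = (∑ a, w a * φ a) * (∑ a, w a * ψ a) := by
  have key : ∀ s : Fin c → α, (∏ i, w (s i)) * (φ (s i₀) * ψ (s j₀))
      = ∏ i, (if i = i₀ then φ (s i) else 1) * (if i = j₀ then ψ (s i) else 1) * w (s i) := by
    intro s
    rw [Finset.prod_mul_distrib, Finset.prod_mul_distrib,
      Finset.prod_ite_eq' Finset.univ i₀ (fun i => φ (s i)),
      Finset.prod_ite_eq' Finset.univ j₀ (fun i => ψ (s i))]
    simp; ring
  simp_rw [key]
  rw [factor (fun i a => (if i = i₀ then φ a else 1) * (if i = j₀ then ψ a else 1) * w a)]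
  have h2 : ∀ i : Fin c, (∑ a, (if i = i₀ then φ a else 1) * (if i = j₀ then ψ a else 1) * w a)
      = (if i = i₀ then ∑ a, w a * φ a else 1) * (if i = j₀ then ∑ a, w a * ψ a else 1) := by
    intro i
    by_cases h1 : i = i₀
    · have h2 : ¬ (i = j₀) := by rw [h1]; exact hij
      simp [h1, h2, hij, mul_comm]
    · by_cases h2 : i = j₀ <;> simp [h1, h2, hw1, hij, Ne.symm hij, mul_comm]
  rw [Finset.prod_congr rfl (fun i _ => h2 i), Finset.prod_mul_distrib,
    Finset.prod_ite_eq' Finset.univ i₀ (fun _ => ∑ a, w a * φ a),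
    Finset.prod_ite_eq' Finset.univ j₀ (fun _ => ∑ a, w a * ψ a)]
  simp

end expectation


lemma herm_transpose {A : Matrix (Fin n) (Fin n) ℝ} (h : A.IsHermitian) : Aᵀ = A := by
  ext i j
  have := congrFun (congrFun h.eq i) j
  simpa [Matrix.conjTranspose_apply] using this

lemma herm_of_transpose {A : Matrix (Fin n) (Fin n) ℝ} (h : Aᵀ = A) : A.IsHermitian := by
  ext i j
  simp only [Matrix.conjTranspose_apply, star_trivial]
  conv_rhs => rw [← h]
  rfl

lemma swap_dot {B : Matrix (Fin n) (Fin n) ℝ} (hB : Bᵀ = B) (x z : Fin n → ℝ) :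
    (B *ᵥ x) ⬝ᵥ z = x ⬝ᵥ (B *ᵥ z) := by
  rw [Matrix.dotProduct_mulVec x B z, ← Matrix.vecMul_transpose, hB]

lemma quad_congr {B A : Matrix (Fin n) (Fin n) ℝ} (hB : Bᵀ = B) (x : Fin n → ℝ) :
    (B *ᵥ x) ⬝ᵥ A *ᵥ (B *ᵥ x) = x ⬝ᵥ (B * A * B) *ᵥ x := by
  rw [← Matrix.mulVec_mulVec, ← Matrix.mulVec_mulVec, ← swap_dot hB]

lemma dot_sumv {ι : Type*} (s : Finset ι) (v : Fin n → ℝ) (F : ι → Fin n → ℝ) :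
    v ⬝ᵥ (∑ i ∈ s, F i) = ∑ i ∈ s, v ⬝ᵥ F i := by
  simp only [dotProduct, Finset.sum_apply, Finset.mul_sum]
  exact Finset.sum_comm

lemma sumv_dot {ι : Type*} (s : Finset ι) (v : Fin n → ℝ) (F : ι → Fin n → ℝ) :
    (∑ i ∈ s, F i) ⬝ᵥ v = ∑ i ∈ s, F i ⬝ᵥ v := by
  simp only [dotProduct, Finset.sum_apply, Finset.sum_mul]
  exact Finset.sum_comm

lemma mulVec_sumv {ι : Type*} (s : Finset ι) (A : Matrix (Fin n) (Fin n) ℝ)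
    (F : ι → Fin n → ℝ) : A *ᵥ (∑ i ∈ s, F i) = ∑ i ∈ s, A *ᵥ F i := by
  ext k
  simp only [Matrix.mulVec, Finset.sum_apply, dot_sumv]

lemma sumM_mulVec {ι : Type*} (s : Finset ι) (F : ι → Matrix (Fin n) (Fin n) ℝ)
    (v : Fin n → ℝ) : (∑ i ∈ s, F i) *ᵥ v = ∑ i ∈ s, F i *ᵥ v := by
  ext k
  simp only [Matrix.mulVec, Finset.sum_apply]
  have h1 : (∑ i ∈ s, F i) k = ∑ i ∈ s, F i k := by
    exact Finset.sum_apply k s F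
  rw [show ((∑ i ∈ s, F i) k ⬝ᵥ v) = ((∑ i ∈ s, F i k) ⬝ᵥ v) from by rw [h1], sumv_dot]

lemma final_arith (c b lam θ σ₁ AA CC NN F0 : ℝ) (hc1 : 1 ≤ c) (hb : (c-1)*lam*θ + 1 ≤ b)
    (hb0 : 0 < b) (hσ0 : 0 ≤ σ₁)
    (hAA0 : 0 ≤ AA) (hAA_lb : σ₁ * NN ≤ AA) (hCC_ub : CC ≤ lam * θ * AA)
    (hF0NN : 2 * F0 ≤ NN) :
    F0 - (c/b) * AA + (1/2) * (1/b)^2 * (c * AA + (c^2 - c) * CC) ≤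
      (1 - c * σ₁ / b) * F0 := by
  have hcc0 : (0:ℝ) ≤ c^2 - c := by nlinarith
  have hcAA0 : (0:ℝ) ≤ c * AA := mul_nonneg (by linarith) hAA0
  have t2 : c * AA * ((c - 1) * lam * θ + 1) ≤ c * AA * b :=
    mul_le_mul_of_nonneg_left hb hcAA0
  have hZ : c * AA + (c^2 - c) * CC ≤ c * AA * b := by
    have t1 : (c^2 - c) * CC ≤ (c^2 - c) * (lam * θ * AA) :=
      mul_le_mul_of_nonneg_left hCC_ub hcc0
    calc c * AA + (c^2 - c) * CC
        ≤ c * AA + (c^2 - c) * (lam * θ * AA) := by linarith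
      _ = c * AA * ((c - 1) * lam * θ + 1) := by ring
      _ ≤ c * AA * b := t2
  have hq2 : (0:ℝ) ≤ (1/2) * (1/b)^2 := by positivity
  have s1 : (1/2) * (1/b)^2 * (c * AA + (c^2 - c) * CC)
      ≤ (1/2) * (1/b)^2 * (c * AA * b) := mul_le_mul_of_nonneg_left hZ hq2
  have hbne : b ≠ 0 := ne_of_gt hb0
  have e2 : F0 - (c/b) * AA + (1/2) * (1/b)^2 * (c * AA * b)
      = F0 - (c * AA) / (2*b) := by
    field_simp
    ring
  have h2 : 2 * c * σ₁ * F0 ≤ c * AA := by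
    nlinarith [mul_nonneg (le_trans zero_le_one hc1) (sub_nonneg.mpr hAA_lb),
      mul_nonneg (mul_nonneg (le_trans zero_le_one hc1) hσ0) (sub_nonneg.mpr hF0NN)]
  have h2b : (0:ℝ) < 2 * b := by linarith
  have s2 : (2 * c * σ₁ * F0) / (2*b) ≤ (c * AA) / (2*b) := by gcongr
  have e3 : (1 - c * σ₁ / b) * F0 = F0 - (2 * c * σ₁ * F0) / (2*b) := by
    field_simp
  linarith [s1, s2, e2.le, e2.ge, e3.le, e3.ge]

end PSN

open PSN in
/-- PSN convergence (one step, conditioned on the current iterate `xk`):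
if `b ≥ (c-1)λθ + 1`, then
`E[f(x^{k+1}) - f(x*)] ≤ (1 - cσ₁/b)(f(x^k) - f(x*))`, where the expectation
is over `c` i.i.d. samplings (with weight `w`) of the parallel update. -/
theorem stmt6 {n : ℕ} (hn : 0 < n) (c : ℕ) (hc : 0 < c) (b : ℝ)
    (f : (Fin n → ℝ) → ℝ) (g : (Fin n → ℝ) → (Fin n → ℝ))
    (G M : Matrix (Fin n) (Fin n) ℝ) (hG : G.PosDef) (hM : M.PosDef)
    (hGM : (M - G).PosSemidef)
    (hlower : ∀ x h, f x + (g x ⬝ᵥ h) + (1/2) * (h ⬝ᵥ (G *ᵥ h)) ≤ f (x + h))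
    (hupper : ∀ x h, f (x + h) ≤ f x + (g x ⬝ᵥ h) + (1/2) * (h ⬝ᵥ (M *ᵥ h)))
    (xstar : Fin n → ℝ) (hstar : ∀ y, f xstar ≤ f y)
    (w : Finset (Fin n) → ℝ) (hw0 : ∀ S, 0 ≤ w S)
    (hw1 : ∑ S : Finset (Fin n), w S = 1) (hvac : w ∅ = 0)
    (hprop : ∀ i : Fin n,
      0 < ∑ S ∈ Finset.univ.filter (fun S : Finset (Fin n) => i ∈ S), w S)
    (X Y : Matrix (Fin n) (Fin n) ℝ)
    (hXdef : X = hG.posSemidef.sqrt *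
      (∑ S : Finset (Fin n), w S • inPlaceInv M S) * hG.posSemidef.sqrt)
    (hYdef : Y = (hG.posSemidef.sqrt)⁻¹ * M * (hG.posSemidef.sqrt)⁻¹)
    (hX : X.IsHermitian) (hY : Y.IsHermitian)
    (lam θ σ₁ : ℝ)
    (hlam : lam = ⨆ i, hY.eigenvalues i)
    (hθ : θ = ⨆ i, hX.eigenvalues i)
    (hσ : σ₁ = ⨅ i, hX.eigenvalues i)
    (hb : ((c : ℝ) - 1) * lam * θ + 1 ≤ b)
    (xk : Fin n → ℝ) :
    ∑ s : Fin c → Finset (Fin n), (∏ i, w (s i)) *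
        (f (xk - (1/b) • ∑ i, (inPlaceInv M (s i)) *ᵥ g xk) - f xstar) ≤
      (1 - (c : ℝ) * σ₁ / b) * (f xk - f xstar) := by
  classical
  set Q := hG.posSemidef.sqrt with hQdef
  have hQh : Q.IsHermitian := by
    rw [hQdef]; unfold Matrix.PosSemidef.sqrt
    exact Matrix.isHermitian_mul_mul_conjTranspose _ (Matrix.isHermitian_diagonal _)
  have hQt : Qᵀ = Q := herm_transpose hQh
  have hQQ : Q * Q = G := by
    rw [hQdef]; unfold Matrix.PosSemidef.sqrt
    set U := (hG.posSemidef.1.eigenvectorUnitary : Matrix (Fin n) (Fin n) ℝ) with hU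
    have hUU : star U * U = 1 :=
      (Matrix.mem_unitaryGroup_iff').mp hG.posSemidef.1.eigenvectorUnitary.2
    have hspec : G = U * Matrix.diagonal hG.posSemidef.1.eigenvalues * star U := by
      have := hG.posSemidef.1.spectral_theorem
      simpa using this
    conv_rhs => rw [hspec]
    calc _ = U * (diagonal ((↑) ∘ (√·) ∘ hG.posSemidef.1.eigenvalues) * (star U * U) *
          diagonal ((↑) ∘ (√·) ∘ hG.posSemidef.1.eigenvalues)) * star U := by
          simp only [Matrix.mul_assoc]
      _ = _ := by
        rw [hUU, Matrix.mul_one, Matrix.diagonal_mul_diagonal]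
        congr 1; congr 1; congr 1; funext i
        simp [Real.mul_self_sqrt (hG.posSemidef.eigenvalues_nonneg i)]
  have hQdet : IsUnit Q.det := by
    have hd : Q.det * Q.det = G.det := by rw [← Matrix.det_mul, hQQ]
    refine isUnit_iff_ne_zero.mpr fun h => ?_
    rw [h, mul_zero] at hd
    exact (ne_of_gt hG.det_pos) hd.symm
  have hQQi : Q * Q⁻¹ = 1 := Matrix.mul_nonsing_inv _ hQdet
  have hQiQ : Q⁻¹ * Q = 1 := Matrix.nonsing_inv_mul _ hQdet
  have hQit : Q⁻¹ᵀ = Q⁻¹ := by rw [Matrix.transpose_nonsing_inv, hQt]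
  have hGi : G⁻¹ = Q⁻¹ * Q⁻¹ := by rw [← hQQ, Matrix.mul_inv_rev]
  set g₀ : Fin n → ℝ := g xk with hg₀
  set barH : Matrix (Fin n) (Fin n) ℝ := ∑ S : Finset (Fin n), w S • inPlaceInv M S with hbarHdef
  have hHSt : ∀ S, (inPlaceInv M S)ᵀ = inPlaceInv M S :=
    fun S => herm_transpose (inPlaceInv_posSemidef hM S).1
  have hbarHt : barHᵀ = barH := by
    rw [hbarHdef, Matrix.transpose_sum]
    exact Finset.sum_congr rfl fun S _ => by rw [Matrix.transpose_smul, hHSt]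
  have hbarH_psd : barH.PosSemidef := by
    refine Matrix.PosSemidef.of_dotProduct_mulVec_nonneg ?_ ?_
    · exact herm_of_transpose hbarHt
    · intro x
      rw [hbarHdef, sumM_mulVec, dot_sumv]
      refine Finset.sum_nonneg fun S _ => ?_
      have h1 : star x ⬝ᵥ ((w S • inPlaceInv M S) *ᵥ x)
          = w S * (star x ⬝ᵥ inPlaceInv M S *ᵥ x) := by
        rw [Matrix.smul_mulVec, dotProduct_smul, smul_eq_mul]
      rw [h1]
      exact mul_nonneg (hw0 S) ((inPlaceInv_posSemidef hM S).dotProduct_mulVec_nonneg x)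
  -- X and Y are PSD
  have hX_psd : X.PosSemidef := by
    rw [hXdef]
    have := hbarH_psd.mul_mul_conjTranspose_same Q
    have hQH : Qᴴ = Q := hQh.eq
    rwa [hQH] at this
  have hY_psd : Y.PosSemidef := by
    rw [hYdef]
    have := hM.posSemidef.mul_mul_conjTranspose_same Q⁻¹
    have hQiH : (Q⁻¹)ᴴ = Q⁻¹ := by
      rw [Matrix.conjTranspose_nonsing_inv, hQh.eq]
    rwa [hQiH] at this
  -- scalar positivity facts
  haveI : Nonempty (Fin n) := ⟨⟨0, hn⟩⟩
  have i0 : Fin n := ⟨0, hn⟩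
  have hσ0 : 0 ≤ σ₁ := by
    rw [hσ]
    exact le_ciInf fun i => hX_psd.eigenvalues_nonneg i
  have hθ0 : 0 ≤ θ := by
    rw [hθ]
    exact le_trans (hX_psd.eigenvalues_nonneg i0)
      (le_ciSup (Set.Finite.bddAbove (Set.finite_range _)) i0)
  have hlam0 : 0 ≤ lam := by
    rw [hlam]
    exact le_trans (hY_psd.eigenvalues_nonneg i0)
      (le_ciSup (Set.Finite.bddAbove (Set.finite_range _)) i0)
  have hc1 : (1 : ℝ) ≤ (c : ℝ) := by exact_mod_cast hc
  have hb1 : (1 : ℝ) ≤ b := by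
    nlinarith [mul_nonneg (mul_nonneg (sub_nonneg.mpr hc1) hlam0) hθ0]
  have hb0 : (0 : ℝ) < b := lt_of_lt_of_le one_pos hb1
  -- the vectors
  set v : Fin n → ℝ := Q⁻¹ *ᵥ g₀ with hv
  set u : Fin n → ℝ := X *ᵥ v with hu
  have hQv : Q *ᵥ v = g₀ := by
    rw [hv, Matrix.mulVec_mulVec, hQQi, Matrix.one_mulVec]
  have hbarH_eq : barH = Q⁻¹ * X * Q⁻¹ := by
    rw [hXdef]
    calc barH = (Q⁻¹ * Q) * barH * (Q * Q⁻¹) := by rw [hQiQ, hQQi, Matrix.one_mul, Matrix.mul_one]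
      _ = Q⁻¹ * (Q * barH * Q) * Q⁻¹ := by simp only [Matrix.mul_assoc]
  set NN : ℝ := v ⬝ᵥ v with hNN
  set AA : ℝ := v ⬝ᵥ X *ᵥ v with hAA
  set CC : ℝ := u ⬝ᵥ Y *ᵥ u with hCC
  have hNN0 : 0 ≤ NN := Finset.sum_nonneg fun i _ => mul_self_nonneg (v i)
  have hAA_eq : g₀ ⬝ᵥ barH *ᵥ g₀ = AA := by
    rw [hbarH_eq, hAA, hv, ← quad_congr (A := X) hQit g₀]
  have hbarHg : barH *ᵥ g₀ = Q⁻¹ *ᵥ u := by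
    rw [hbarH_eq, hu, hv, Matrix.mulVec_mulVec, Matrix.mulVec_mulVec, Matrix.mul_assoc]
  have hcross_eq : (barH *ᵥ g₀) ⬝ᵥ M *ᵥ (barH *ᵥ g₀) = CC := by
    rw [hbarHg, hCC, hYdef]
    exact quad_congr hQit u
  have hNN_eq : g₀ ⬝ᵥ G⁻¹ *ᵥ g₀ = NN := by
    rw [hGi, hNN, hv, ← Matrix.mulVec_mulVec, ← swap_dot hQit g₀]
  -- Rayleigh bounds
  have hAA_lb : σ₁ * NN ≤ AA := by
    rw [hσ, hAA, hNN]
    exact rayleigh_lower hX hn v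
  have hAA0 : 0 ≤ AA := le_trans (mul_nonneg hσ0 hNN0) hAA_lb
  have hCC_ub : CC ≤ lam * θ * AA := by
    have h1 : CC ≤ lam * (u ⬝ᵥ u) := by
      rw [hCC, hlam]
      exact rayleigh_upper hY hn u
    have h2 : u ⬝ᵥ u = v ⬝ᵥ (X * X) *ᵥ v := by
      rw [hu, ← Matrix.mulVec_mulVec]
      rw [swap_dot (herm_transpose hX) v]
    have h3 : v ⬝ᵥ (X * X) *ᵥ v ≤ θ * AA := by
      rw [hθ, hAA]
      exact rayleigh_sq hX hn hX_psd v
    calc CC ≤ lam * (u ⬝ᵥ u) := h1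
      _ = lam * (v ⬝ᵥ (X * X) *ᵥ v) := by rw [h2]
      _ ≤ lam * (θ * AA) := mul_le_mul_of_nonneg_left h3 hlam0
      _ = lam * θ * AA := by ring
  -- lower bound : f xk - f xstar ≤ NN / 2
  set F0 : ℝ := f xk - f xstar with hF0def
  have hF00 : 0 ≤ F0 := sub_nonneg.mpr (hstar xk)
  have hGdet : IsUnit G.det := isUnit_iff_ne_zero.mpr (ne_of_gt hG.det_pos)
  have hGGi : G * G⁻¹ = 1 := Matrix.mul_nonsing_inv _ hGdet
  have hGiG : G⁻¹ * G = 1 := Matrix.nonsing_inv_mul _ hGdet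
  have hGt : Gᵀ = G := herm_transpose hG.isHermitian
  have hGit : G⁻¹ᵀ = G⁻¹ := by rw [Matrix.transpose_nonsing_inv, hGt]
  have hF0NN : 2 * F0 ≤ NN := by
    have hl := hlower xk (xstar - xk)
    have hx : xk + (xstar - xk) = xstar := by abel
    rw [hx] at hl
    set d : Fin n → ℝ := xstar - xk with hd
    set r : Fin n → ℝ := G⁻¹ *ᵥ g₀ with hr
    have hGr : G *ᵥ r = g₀ := by
      rw [hr, Matrix.mulVec_mulVec, hGGi, Matrix.one_mulVec]
    have hq : 0 ≤ (d + r) ⬝ᵥ G *ᵥ (d + r) := by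
      have := hG.posSemidef.dotProduct_mulVec_nonneg (d + r)
      simpa using this
    have hexpand : (d + r) ⬝ᵥ G *ᵥ (d + r) = d ⬝ᵥ G *ᵥ d + 2 * (g₀ ⬝ᵥ d) + NN := by
      rw [Matrix.mulVec_add, hGr, dotProduct_add, add_dotProduct,
        add_dotProduct]
      have e1 : r ⬝ᵥ G *ᵥ d = g₀ ⬝ᵥ d := by
        rw [hr, swap_dot hGit g₀, Matrix.mulVec_mulVec, hGiG, Matrix.one_mulVec]
      have e2 : r ⬝ᵥ g₀ = NN := by
        rw [dotProduct_comm, hr, hNN_eq]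
      have e3 : d ⬝ᵥ g₀ = g₀ ⬝ᵥ d := dotProduct_comm d g₀
      rw [e1, e2, e3]
      ring
    rw [hexpand] at hq
    linarith
  -- expectation computation
  have hexp : ∑ s : Fin c → Finset (Fin n), (∏ i, w (s i)) *
        (f (xk - (1/b) • ∑ i, (inPlaceInv M (s i)) *ᵥ g₀) - f xstar) ≤
      F0 - ((c : ℝ)/b) * AA + (1/2) * (1/b)^2 * ((c : ℝ) * AA + ((c:ℝ)^2 - c) * CC) := by
    set φ : Finset (Fin n) → ℝ := fun S => g₀ ⬝ᵥ (inPlaceInv M S *ᵥ g₀) with hφdef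
    set ψ : Finset (Fin n) → Finset (Fin n) → ℝ :=
      fun S T => (inPlaceInv M S *ᵥ g₀) ⬝ᵥ (M *ᵥ (inPlaceInv M T *ᵥ g₀)) with hψdef
    have hbarHvec : barH *ᵥ g₀ = ∑ S : Finset (Fin n), w S • (inPlaceInv M S *ᵥ g₀) := by
      rw [hbarHdef, sumM_mulVec]
      exact Finset.sum_congr rfl fun S _ => Matrix.smul_mulVec (w S) _ _
    have hMbarHvec : M *ᵥ (barH *ᵥ g₀)
        = ∑ T : Finset (Fin n), w T • (M *ᵥ (inPlaceInv M T *ᵥ g₀)) := by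
      rw [hbarHvec, mulVec_sumv]
      exact Finset.sum_congr rfl fun T _ => Matrix.mulVec_smul M (w T) _
    have hφsum : ∑ S : Finset (Fin n), w S * φ S = AA := by
      have e1 : g₀ ⬝ᵥ (barH *ᵥ g₀) = ∑ S : Finset (Fin n), w S * φ S := by
        rw [hbarHvec, dot_sumv]
        exact Finset.sum_congr rfl fun S _ => by
          rw [dotProduct_smul, smul_eq_mul, hφdef]
      rw [← e1, hAA_eq]
    have hdiag : ∀ S, ψ S S = φ S := by
      intro S
      rw [hψdef, hφdef]
      show (inPlaceInv M S *ᵥ g₀) ⬝ᵥ M *ᵥ (inPlaceInv M S *ᵥ g₀) = g₀ ⬝ᵥ (inPlaceInv M S *ᵥ g₀)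
      rw [quad_congr (hHSt S) g₀, inPlaceInv_mul_mul hM S]
    have E3 : ∀ i j : Fin c, (∑ s : Fin c → Finset (Fin n), (∏ k, w (s k)) * ψ (s i) (s j))
        = if i = j then AA else CC := by
      intro i j
      by_cases hij : i = j
      · subst hij
        rw [if_pos rfl]
        calc ∑ s : Fin c → Finset (Fin n), (∏ k, w (s k)) * ψ (s i) (s i)
            = ∑ s : Fin c → Finset (Fin n), (∏ k, w (s k)) * φ (s i) :=
              Finset.sum_congr rfl fun s _ => by rw [hdiag]
          _ = ∑ S : Finset (Fin n), w S * φ S := marg1 w hw1 i φ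
          _ = AA := hφsum
      · rw [if_neg hij]
        calc ∑ s : Fin c → Finset (Fin n), (∏ k, w (s k)) * ψ (s i) (s j)
            = ∑ s : Fin c → Finset (Fin n), ∑ k : Fin n, (∏ l, w (s l)) *
                ((inPlaceInv M (s i) *ᵥ g₀) k * (M *ᵥ (inPlaceInv M (s j) *ᵥ g₀)) k) := by
              refine Finset.sum_congr rfl fun s _ => ?_
              rw [hψdef]
              show (∏ l, w (s l)) * ((inPlaceInv M (s i) *ᵥ g₀) ⬝ᵥ (M *ᵥ (inPlaceInv M (s j) *ᵥ g₀))) = _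
              rw [dotProduct, Finset.mul_sum]
          _ = ∑ k : Fin n, ∑ s : Fin c → Finset (Fin n), (∏ l, w (s l)) *
                ((inPlaceInv M (s i) *ᵥ g₀) k * (M *ᵥ (inPlaceInv M (s j) *ᵥ g₀)) k) :=
              Finset.sum_comm
          _ = ∑ k : Fin n, (∑ S : Finset (Fin n), w S * (inPlaceInv M S *ᵥ g₀) k) *
                (∑ T : Finset (Fin n), w T * (M *ᵥ (inPlaceInv M T *ᵥ g₀)) k) :=
              Finset.sum_congr rfl fun k _ => marg2 w hw1 i j hij
                (fun S => (inPlaceInv M S *ᵥ g₀) k) (fun T => (M *ᵥ (inPlaceInv M T *ᵥ g₀)) k)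
          _ = ∑ k : Fin n, (barH *ᵥ g₀) k * (M *ᵥ (barH *ᵥ g₀)) k := by
              refine Finset.sum_congr rfl fun k _ => ?_
              congr 1
              · rw [hbarHvec, Finset.sum_apply]
                exact Finset.sum_congr rfl fun S _ => by rw [Pi.smul_apply, smul_eq_mul]
              · rw [hMbarHvec, Finset.sum_apply]
                exact Finset.sum_congr rfl fun T _ => by rw [Pi.smul_apply, smul_eq_mul]
          _ = (barH *ᵥ g₀) ⬝ᵥ (M *ᵥ (barH *ᵥ g₀)) := rfl
          _ = CC := hcross_eq
    -- pointwise upper bound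
    have stepA : ∀ s : Fin c → Finset (Fin n),
        f (xk - (1/b) • ∑ i, inPlaceInv M (s i) *ᵥ g₀) - f xstar ≤
        F0 - (1/b) * (∑ i, φ (s i)) + (1/2) * (1/b)^2 * (∑ i, ∑ j, ψ (s i) (s j)) := by
      intro s
      set T : Fin n → ℝ := ∑ i, inPlaceInv M (s i) *ᵥ g₀ with hT
      have h1 : xk - (1/b) • T = xk + (-((1/b) • T)) := by rw [sub_eq_add_neg]
      have h2 := hupper xk (-((1/b) • T))
      rw [← h1] at h2
      have h3 : g₀ ⬝ᵥ (-((1/b) • T)) = -((1/b) * (∑ i, φ (s i))) := by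
        rw [dotProduct_neg, dotProduct_smul, smul_eq_mul, hT, dot_sumv]
      have hTT : T ⬝ᵥ M *ᵥ T = ∑ i, ∑ j, ψ (s i) (s j) := by
        rw [hT, mulVec_sumv, sumv_dot]
        exact Finset.sum_congr rfl fun i _ => by rw [dot_sumv]
      have h4 : (-((1/b) • T)) ⬝ᵥ M *ᵥ (-((1/b) • T))
          = (1/b)^2 * (∑ i, ∑ j, ψ (s i) (s j)) := by
        rw [neg_dotProduct, Matrix.mulVec_neg, dotProduct_neg, neg_neg,
          smul_dotProduct, Matrix.mulVec_smul, dotProduct_smul,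
          smul_eq_mul, smul_eq_mul, hTT]
        ring
      rw [h3, h4] at h2
      calc f (xk - (1/b) • T) - f xstar
          ≤ (f xk + (-((1/b) * (∑ i, φ (s i)))) + 1/2 * ((1/b)^2 * (∑ i, ∑ j, ψ (s i) (s j))))
            - f xstar := by linarith
        _ = F0 - (1/b) * (∑ i, φ (s i)) + (1/2) * (1/b)^2 * (∑ i, ∑ j, ψ (s i) (s j)) := by
            rw [hF0def]; ring
    have stepB : ∑ s : Fin c → Finset (Fin n), (∏ i, w (s i)) *
          (f (xk - (1/b) • ∑ i, inPlaceInv M (s i) *ᵥ g₀) - f xstar)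
        ≤ ∑ s : Fin c → Finset (Fin n), (∏ i, w (s i)) *
          (F0 - (1/b) * (∑ i, φ (s i)) + (1/2) * (1/b)^2 * (∑ i, ∑ j, ψ (s i) (s j))) :=
      Finset.sum_le_sum fun s _ => mul_le_mul_of_nonneg_left (stepA s)
        (Finset.prod_nonneg fun i _ => hw0 _)
    have E1 : ∑ s : Fin c → Finset (Fin n), (∏ i, w (s i)) = 1 := sum_prod_one w hw1
    have E2 : ∑ s : Fin c → Finset (Fin n), (∏ i, w (s i)) * (∑ i, φ (s i))
        = (c : ℝ) * AA := by
      calc ∑ s : Fin c → Finset (Fin n), (∏ i, w (s i)) * (∑ i, φ (s i))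
          = ∑ s : Fin c → Finset (Fin n), ∑ i, (∏ l, w (s l)) * φ (s i) :=
            Finset.sum_congr rfl fun s _ => Finset.mul_sum _ _ _
        _ = ∑ i : Fin c, ∑ s : Fin c → Finset (Fin n), (∏ l, w (s l)) * φ (s i) :=
            Finset.sum_comm
        _ = ∑ _i : Fin c, AA :=
            Finset.sum_congr rfl fun i _ => by rw [marg1 w hw1 i φ, hφsum]
        _ = (c : ℝ) * AA := by
            rw [Finset.sum_const, Finset.card_univ, Fintype.card_fin, nsmul_eq_mul]
    have E4 : ∑ s : Fin c → Finset (Fin n), (∏ i, w (s i)) * (∑ i, ∑ j, ψ (s i) (s j))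
        = (c : ℝ) * AA + ((c:ℝ)^2 - c) * CC := by
      have hper : ∀ i : Fin c, (∑ j : Fin c, if i = j then AA else CC)
          = AA + ((c:ℝ) - 1) * CC := by
        intro i
        have e : ∀ j : Fin c, (if i = j then AA else CC)
            = CC + (if i = j then AA - CC else 0) := by
          intro j
          by_cases h : i = j
          · rw [if_pos h, if_pos h]; ring
          · rw [if_neg h, if_neg h]; ring
        rw [Finset.sum_congr rfl fun j _ => e j, Finset.sum_add_distrib,
          Finset.sum_const, Finset.sum_ite_eq Finset.univ i (fun _ => AA - CC),
          if_pos (Finset.mem_univ i), Finset.card_univ, Fintype.card_fin, nsmul_eq_mul]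
        ring
      calc ∑ s : Fin c → Finset (Fin n), (∏ i, w (s i)) * (∑ i, ∑ j, ψ (s i) (s j))
          = ∑ s : Fin c → Finset (Fin n), ∑ i : Fin c, ∑ j : Fin c,
              (∏ l, w (s l)) * ψ (s i) (s j) := by
            refine Finset.sum_congr rfl fun s _ => ?_
            rw [Finset.mul_sum]
            exact Finset.sum_congr rfl fun i _ => Finset.mul_sum _ _ _
        _ = ∑ i : Fin c, ∑ s : Fin c → Finset (Fin n), ∑ j : Fin c,
              (∏ l, w (s l)) * ψ (s i) (s j) := Finset.sum_comm
        _ = ∑ i : Fin c, ∑ j : Fin c, ∑ s : Fin c → Finset (Fin n),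
              (∏ l, w (s l)) * ψ (s i) (s j) :=
            Finset.sum_congr rfl fun i _ => Finset.sum_comm
        _ = ∑ i : Fin c, ∑ j : Fin c, (if i = j then AA else CC) :=
            Finset.sum_congr rfl fun i _ => Finset.sum_congr rfl fun j _ => E3 i j
        _ = ∑ _i : Fin c, (AA + ((c:ℝ) - 1) * CC) :=
            Finset.sum_congr rfl fun i _ => hper i
        _ = (c : ℝ) * AA + ((c:ℝ)^2 - c) * CC := by
            rw [Finset.sum_const, Finset.card_univ, Fintype.card_fin, nsmul_eq_mul]
            ring
    have hsplit : ∑ s : Fin c → Finset (Fin n), (∏ i, w (s i)) *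
          (F0 - (1/b) * (∑ i, φ (s i)) + (1/2) * (1/b)^2 * (∑ i, ∑ j, ψ (s i) (s j)))
        = F0 * (∑ s : Fin c → Finset (Fin n), (∏ i, w (s i)))
          - (1/b) * (∑ s : Fin c → Finset (Fin n), (∏ i, w (s i)) * (∑ i, φ (s i)))
          + (1/2) * (1/b)^2 * (∑ s : Fin c → Finset (Fin n), (∏ i, w (s i)) *
              (∑ i, ∑ j, ψ (s i) (s j))) := by
      rw [Finset.mul_sum, Finset.mul_sum, Finset.mul_sum, ← Finset.sum_sub_distrib,
        ← Finset.sum_add_distrib]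
      refine Finset.sum_congr rfl fun s _ => ?_
      ring
    calc ∑ s : Fin c → Finset (Fin n), (∏ i, w (s i)) *
          (f (xk - (1/b) • ∑ i, inPlaceInv M (s i) *ᵥ g₀) - f xstar)
        ≤ ∑ s : Fin c → Finset (Fin n), (∏ i, w (s i)) *
          (F0 - (1/b) * (∑ i, φ (s i)) + (1/2) * (1/b)^2 * (∑ i, ∑ j, ψ (s i) (s j))) := stepB
      _ = F0 * 1 - (1/b) * ((c:ℝ) * AA) + (1/2) * (1/b)^2 * ((c:ℝ) * AA + ((c:ℝ)^2 - c) * CC) := by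
          rw [hsplit, E1, E2, E4]
      _ = F0 - ((c : ℝ)/b) * AA + (1/2) * (1/b)^2 * ((c : ℝ) * AA + ((c:ℝ)^2 - c) * CC) := by
          ring
  -- final arithmetic
  have hfinal : F0 - ((c : ℝ)/b) * AA + (1/2) * (1/b)^2 * ((c : ℝ) * AA + ((c:ℝ)^2 - c) * CC) ≤
      (1 - (c : ℝ) * σ₁ / b) * F0 :=
    final_arith (c:ℝ) b lam θ σ₁ AA CC NN F0 hc1 hb hb0 hσ0 hAA0 hAA_lb hCC_ub hF0NN
  calc ∑ s : Fin c → Finset (Fin n), (∏ i, w (s i)) *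
        (f (xk - (1/b) • ∑ i, (inPlaceInv M (s i)) *ᵥ g xk) - f xstar)
      ≤ F0 - ((c : ℝ)/b) * AA + (1/2) * (1/b)^2 * ((c : ℝ) * AA + ((c:ℝ)^2 - c) * CC) := hexp
    _ ≤ (1 - (c : ℝ) * σ₁ / b) * F0 := hfinal
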